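/- arXiv:0908.1313 — 3 statements merged into one kernel-verified Lean document; each statement's English description precedes it below -/
import Mathlib

section
/- If G is a square-stable graph and v is a vertex belonging to some maximum stable set of G², then v is a simplicial vertex of G. -/
open SimpleGraph

/-- The square of a graph: vertices adjacent iff at distance 1 or 2 in `G`. -/
def SimpleGraph.sq {V : Type*} (G : SimpleGraph V) : SimpleGraph V where
  Adj u v := G.Adj u v ∨ (u ≠ v ∧ ∃ w, G.Adj u w ∧ G.Adj w v)
  symm := by
    constructor
    rintro u v (h | ⟨hne, w, h1, h2⟩)
    · exact Or.inl h.symm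
    · exact Or.inr ⟨hne.symm, w, h2.symm, h1.symm⟩
  loopless := by
    constructor
    rintro u (h | ⟨hne, _⟩)
    · exact G.irrefl h
    · exact hne rfl

/-- A stable (independent) set of vertices. -/
def SimpleGraph.IsStableSet {V : Type*} (G : SimpleGraph V) (s : Set V) : Prop :=
  s.Pairwise fun u v => ¬ G.Adj u v

/-- The stability (independence) number. -/
noncomputable def SimpleGraph.alpha {V : Type*} (G : SimpleGraph V) : ℕ :=
  sSup {n | ∃ s : Finset V, G.IsStableSet ↑s ∧ s.card = n}

/-- The matching number: maximum number of edges in a matching. -/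
noncomputable def SimpleGraph.mu {V : Type*} (G : SimpleGraph V) : ℕ :=
  sSup {n | ∃ M : G.Subgraph, M.IsMatching ∧ M.edgeSet.ncard = n}

/-- `s` is a maximum stable set. -/
def SimpleGraph.IsMaximumStable {V : Type*} (G : SimpleGraph V) (s : Finset V) : Prop :=
  G.IsStableSet ↑s ∧ s.card = G.alpha

/-- `s` is a maximal stable set. -/
def SimpleGraph.IsMaximalStable {V : Type*} (G : SimpleGraph V) (s : Finset V) : Prop :=
  G.IsStableSet ↑s ∧ ∀ v ∉ s, ¬ G.IsStableSet (insert v (↑s : Set V))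

/-- `G` is square-stable if `α(G) = α(G²)`. -/
def SimpleGraph.SquareStable {V : Type*} (G : SimpleGraph V) : Prop :=
  G.alpha = G.sq.alpha

/-- König-Egerváry graph: `α(G) + μ(G) = |V(G)|`. -/
def SimpleGraph.KonigEgervary {V : Type*} [Fintype V] (G : SimpleGraph V) : Prop :=
  G.alpha + G.mu = Fintype.card V

/-- A pendant vertex: a vertex of degree 1. -/
def SimpleGraph.Pendant {V : Type*} (G : SimpleGraph V) (v : V) : Prop :=
  (G.neighborSet v).ncard = 1

/-- `G` has a perfect matching consisting of pendant edges. -/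
def SimpleGraph.HasPendantPerfectMatching {V : Type*} (G : SimpleGraph V) : Prop :=
  ∃ M : G.Subgraph, M.IsPerfectMatching ∧ ∀ e ∈ M.edgeSet, ∃ v ∈ e, G.Pendant v

/-- A simplicial vertex: its neighborhood induces a clique. -/
def SimpleGraph.IsSimplicial {V : Type*} (G : SimpleGraph V) (v : V) : Prop :=
  G.IsClique (G.neighborSet v)

/-- `G` is well-covered: every maximal stable set is maximum. -/
def SimpleGraph.WellCovered {V : Type*} (G : SimpleGraph V) : Prop :=
  ∀ s : Finset V, G.IsMaximalStable s → s.card = G.alpha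

/-- `G` is very well-covered: well-covered, no isolated vertices, `|V| = 2α`. -/
def SimpleGraph.VeryWellCovered {V : Type*} [Fintype V] (G : SimpleGraph V) : Prop :=
  G.WellCovered ∧ (∀ v : V, (G.neighborSet v).ncard ≠ 0) ∧ Fintype.card V = 2 * G.alpha


lemma card_le_alpha {V : Type*} [Fintype V] (G : SimpleGraph V) (s : Finset V)
    (h : G.IsStableSet ↑s) : s.card ≤ G.alpha := by
  apply le_csSup
  · refine ⟨Fintype.card V, ?_⟩
    rintro n ⟨t, -, rfl⟩
    simpa using Finset.card_le_univ t
  · exact ⟨s, h, rfl⟩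

theorem stmt6 {V : Type*} [Fintype V] (G : SimpleGraph V) (hc : G.Connected)
    (hss : G.SquareStable) (v : V)
    (h : ∃ s : Finset V, G.sq.IsMaximumStable s ∧ v ∈ s) :
    G.IsSimplicial v := by
  classical
  obtain ⟨s, ⟨hstab, hcard⟩, hv⟩ := h
  intro x hx y hy hne
  by_contra hadj
  rw [SimpleGraph.mem_neighborSet] at hx hy
  have hxs : x ∉ s := fun hxs =>
    hstab hv hxs (G.ne_of_adj hx) (Or.inl hx)
  have hys : y ∉ s := fun hys =>
    hstab hv hys (G.ne_of_adj hy) (Or.inl hy)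
  have keyx : ∀ u ∈ s, u ≠ v → ¬ G.Adj x u := fun u hu huv h' =>
    hstab hv hu huv.symm (Or.inr ⟨huv.symm, x, hx, h'⟩)
  have keyy : ∀ u ∈ s, u ≠ v → ¬ G.Adj y u := fun u hu huv h' =>
    hstab hv hu huv.symm (Or.inr ⟨huv.symm, y, hy, h'⟩)
  set t : Finset V := insert x (insert y (s.erase v)) with ht
  have hts : G.IsStableSet ↑t := by
    intro a ha b hb hab
    simp only [ht, Finset.coe_insert, Set.mem_insert_iff, Finset.mem_coe,
      Finset.mem_erase] at ha hb
    rcases ha with rfl | rfl | ⟨hav, has⟩ <;>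
      rcases hb with rfl | rfl | ⟨hbv, hbs⟩
    · exact absurd rfl hab
    · exact hadj
    · exact keyx b hbs hbv
    · exact fun h => hadj h.symm
    · exact absurd rfl hab
    · exact keyy b hbs hbv
    · exact fun h => keyx a has hav h.symm
    · exact fun h => keyy a has hav h.symm
    · exact fun h => hstab has hbs hab (Or.inl h)
  have h1 : y ∉ s.erase v := fun h => hys (Finset.mem_of_mem_erase h)
  have h2 : x ∉ insert y (s.erase v) := by
    simp only [Finset.mem_insert, Finset.mem_erase]
    rintro (rfl | ⟨-, h⟩)
    · exact hne rfl
    · exact hxs h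
  have hcardt : t.card = s.card + 1 := by
    rw [ht, Finset.card_insert_of_notMem h2, Finset.card_insert_of_notMem h1,
      Finset.card_erase_of_mem hv]
    have : 1 ≤ s.card := Finset.card_pos.2 ⟨v, hv⟩
    omega
  have hle := card_le_alpha G t hts
  have hsa : s.card = G.alpha := by rw [hcard, hss]
  omega
end

section
/- A tree T on n ≥ 2 vertices is square-stable if and only if T has a perfect matching consisting of pendant edges. -/
open SimpleGraph

namespace SquareStableAux

variable {V : Type*}

lemma bdd (G : SimpleGraph V) [Fintype V] :
    Fintype.card V ∈ upperBounds {n | ∃ s : Finset V, G.IsStableSet ↑s ∧ s.card = n} := by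
  rintro n ⟨s, -, rfl⟩
  exact s.card_le_univ

lemma card_le_alpha [Fintype V] {G : SimpleGraph V} {s : Finset V}
    (hs : G.IsStableSet ↑s) : s.card ≤ G.alpha :=
  le_csSup ⟨Fintype.card V, bdd G⟩ ⟨s, hs, rfl⟩

lemma alpha_spec [Fintype V] (G : SimpleGraph V) :
    ∃ s : Finset V, G.IsStableSet ↑s ∧ s.card = G.alpha := by
  have hne : {n | ∃ s : Finset V, G.IsStableSet ↑s ∧ s.card = n}.Nonempty :=
    ⟨0, ∅, by simp [SimpleGraph.IsStableSet], by simp⟩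
  exact Nat.sSup_mem hne ⟨Fintype.card V, bdd G⟩

lemma stable_of_sq {G : SimpleGraph V} {s : Set V} (hs : G.sq.IsStableSet s) :
    G.IsStableSet s :=
  fun u hu v hv hne h => hs hu hv hne (Or.inl h)

lemma alpha_sq_le [Fintype V] (G : SimpleGraph V) : G.sq.alpha ≤ G.alpha := by
  obtain ⟨s, hs, hc⟩ := alpha_spec G.sq
  exact hc ▸ card_le_alpha (stable_of_sq hs)

lemma exists_adj [Fintype V] {G : SimpleGraph V} (hc : G.Connected)
    (h2 : 2 ≤ Fintype.card V) (u : V) : ∃ w, G.Adj u w := by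
  obtain ⟨v, hv⟩ := Fintype.exists_ne_of_one_lt_card (by omega) u
  obtain ⟨p⟩ := hc.preconnected u v
  cases p with
  | nil => exact absurd rfl hv.symm
  | cons h _ => exact ⟨_, h⟩

lemma no_triangle {G : SimpleGraph V} (ht : G.IsAcyclic) {a b c : V}
    (hab : G.Adj a b) (hbc : G.Adj b c) (hca : G.Adj c a) : False := by
  have hcyc : (Walk.cons hab (Walk.cons hbc (Walk.cons hca Walk.nil))).IsCycle := by
    rw [Walk.cons_isCycle_iff]
    constructor
    · rw [Walk.isPath_def]
      simp [hbc.ne, hab.ne', hca.ne]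
    · simp only [Walk.edges_cons, Walk.edges_nil, List.mem_cons, List.not_mem_nil, or_false]
      rintro (h | h) <;> rw [Sym2.eq_iff] at h
      · rcases h with ⟨h1, -⟩ | ⟨h1, -⟩
        · exact hab.ne h1
        · exact hca.ne' h1
      · rcases h with ⟨h1, -⟩ | ⟨-, h2⟩
        · exact hca.ne' h1
        · exact hbc.ne h2
  exact ht _ hcyc

end SquareStableAux

open SquareStableAux

theorem stmt13 {V : Type*} [Fintype V] (T : SimpleGraph V) (ht : T.IsTree)
    (h2 : 2 ≤ Fintype.card V) :
    T.SquareStable ↔ T.HasPendantPerfectMatching := by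
  classical
  constructor
  · -- square-stable → pendant perfect matching
    intro hsq
    obtain ⟨S, hSst, hScard⟩ := alpha_spec T.sq
    have hScardT : S.card = T.alpha := by rw [hScard, hsq]
    have hT : T.IsStableSet (↑S : Set V) := stable_of_sq hSst
    have huniq : ∀ v : V, ∀ u ∈ S, ∀ u' ∈ S, T.Adj u v → T.Adj u' v → u = u' := by
      intro v u hu u' hu' h h'
      by_contra hne
      exact hSst (by exact_mod_cast hu) (by exact_mod_cast hu') hne
        (Or.inr ⟨hne, v, h, h'.symm⟩)
    have hmax : ∀ v ∉ S, ∃ u ∈ S, T.Adj u v := by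
      intro v hv
      by_contra hno
      push_neg at hno
      have hstab : T.IsStableSet (↑(insert v S) : Set V) := by
        intro a ha b hb hne hadj
        simp only [Finset.coe_insert, Set.mem_insert_iff, Finset.mem_coe] at ha hb
        rcases ha with rfl | ha <;> rcases hb with rfl | hb
        · exact hne rfl
        · exact hno b hb hadj.symm
        · exact hno a ha hadj
        · exact hT (by exact_mod_cast ha) (by exact_mod_cast hb) hne hadj
      have := card_le_alpha hstab
      rw [Finset.card_insert_of_notMem hv, hScardT] at this
      omega
    have hnbr : ∀ u ∈ S, ∃ w, T.neighborSet u = {w} := by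
      intro u hu
      obtain ⟨w, hw⟩ := exists_adj ht.isConnected h2 u
      refine ⟨w, Set.eq_singleton_iff_unique_mem.2 ⟨hw, ?_⟩⟩
      intro w' hw'
      by_contra hne
      have hwS : ∀ x : V, T.Adj u x → x ∉ S := by
        intro x hx hxS
        exact hT (by exact_mod_cast hu) (by exact_mod_cast hxS) hx.ne hx
      have hw'adj : T.Adj u w' := hw'
      have hnadj : ¬ T.Adj w' w := fun h => no_triangle ht.2 h hw.symm hw'adj
      have honly : ∀ x ∈ S, ∀ y : V, T.Adj u y → T.Adj x y → x = u := by
        intro x hx y hy hxy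
        exact huniq y x hx u hu hxy hy
      set S' : Finset V := insert w' (insert w (S.erase u)) with hS'
      have hwnS : w ∉ S := hwS w hw
      have hw'nS : w' ∉ S := hwS w' hw'adj
      have hstab : T.IsStableSet (↑S' : Set V) := by
        intro a ha b hb hab hadj
        simp only [hS', Finset.coe_insert, Set.mem_insert_iff, Finset.mem_coe,
          Finset.mem_erase, Finset.mem_insert] at ha hb
        rcases ha with rfl | rfl | ⟨hau, haS⟩ <;> rcases hb with rfl | rfl | ⟨hbu, hbS⟩
        · exact hab rfl
        · exact hnadj hadj
        · exact hbu (honly b hbS a hw'adj hadj.symm)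
        · exact hnadj hadj.symm
        · exact hab rfl
        · exact hbu (honly b hbS a hw hadj.symm)
        · exact hau (honly a haS b hw'adj hadj)
        · exact hau (honly a haS b hw hadj)
        · exact hT (by exact_mod_cast haS) (by exact_mod_cast hbS) hab hadj
      have hcard := card_le_alpha hstab
      have h1 : 1 ≤ S.card := Finset.card_pos.2 ⟨u, hu⟩
      have hc1 : (S.erase u).card = S.card - 1 := Finset.card_erase_of_mem hu
      have hwn : w ∉ S.erase u := fun h => hwnS (Finset.mem_of_mem_erase h)
      have hw'n : w' ∉ insert w (S.erase u) := by
        simp only [Finset.mem_insert]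
        rintro (rfl | h)
        · exact hne rfl
        · exact hw'nS (Finset.mem_of_mem_erase h)
      rw [hS', Finset.card_insert_of_notMem hw'n, Finset.card_insert_of_notMem hwn,
        hc1, ← hScardT] at hcard
      omega
    refine ⟨⟨Set.univ, fun x y => T.Adj x y ∧ (x ∈ S ∨ y ∈ S), fun h => h.1,
      fun _ => trivial, ⟨fun x y h => ⟨h.1.symm, h.2.symm⟩⟩⟩, ⟨?_, fun _ => trivial⟩, ?_⟩
    · -- IsMatching
      intro v _
      by_cases hv : v ∈ S
      · obtain ⟨w, hw⟩ := hnbr v hv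
        have hadj : T.Adj v w := by
          have : w ∈ T.neighborSet v := by rw [hw]; exact rfl
          exact this
        refine ⟨w, ⟨hadj, Or.inl hv⟩, ?_⟩
        intro y hy
        have : y ∈ T.neighborSet v := hy.1
        rwa [hw] at this
      · obtain ⟨u, hu, huv⟩ := hmax v hv
        refine ⟨u, ⟨huv.symm, Or.inr hu⟩, ?_⟩
        intro y hy
        rcases hy.2 with h | h
        · exact absurd h hv
        · exact huniq v y h u hu hy.1.symm huv
    · -- pendant edges
      intro e he
      induction e using Sym2.ind with
      | _ x y =>
        rw [SimpleGraph.Subgraph.mem_edgeSet] at he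
        obtain ⟨hadj, hx | hy⟩ := he
        · obtain ⟨w, hw⟩ := hnbr x hx
          refine ⟨x, Sym2.mem_mk_left x y, ?_⟩
          show (T.neighborSet x).ncard = 1
          rw [hw]; simp
        · obtain ⟨w, hw⟩ := hnbr y hy
          refine ⟨y, Sym2.mem_mk_right x y, ?_⟩
          show (T.neighborSet y).ncard = 1
          rw [hw]; simp
  · -- pendant perfect matching → square-stable
    rintro ⟨M, hM, hpend⟩
    letI : LinearOrder V := LinearOrder.lift' (Fintype.equivFin V) (Equiv.injective _)
    set p : V → V := fun v => (hM.1 (hM.2 v)).choose with hp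
    have hpadj : ∀ v, M.Adj v (p v) := fun v => (hM.1 (hM.2 v)).choose_spec.1
    have hpuniq : ∀ v w, M.Adj v w → w = p v := fun v w h =>
      (hM.1 (hM.2 v)).choose_spec.2 w h
    have hpinv : ∀ v, p (p v) = v := fun v => (hpuniq (p v) v (hpadj v).symm).symm
    have hpne : ∀ v, v ≠ p v := fun v => (M.adj_sub (hpadj v)).ne
    have hpendant : ∀ v, T.Pendant v ∨ T.Pendant (p v) := by
      intro v
      have he : s(v, p v) ∈ M.edgeSet := by rw [SimpleGraph.Subgraph.mem_edgeSet]; exact hpadj v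
      obtain ⟨x, hx, hpx⟩ := hpend _ he
      rw [Sym2.mem_iff] at hx
      rcases hx with rfl | rfl
      · exact Or.inl hpx
      · exact Or.inr hpx
    set S : Finset V := Finset.univ.filter
      (fun v => T.Pendant v ∧ (T.Pendant (p v) → v < p v)) with hSdef
    have hmemS : ∀ v, v ∈ S ↔ T.Pendant v ∧ (T.Pendant (p v) → v < p v) := by
      intro v; simp [hSdef]
    have hone : ∀ v, v ∈ S ↔ p v ∉ S := by
      intro v
      rw [hmemS, hmemS]
      constructor
      · rintro ⟨h1, h2⟩ ⟨h3, h4⟩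
        rw [hpinv] at h4
        exact absurd (h4 h1) (not_lt.2 (h2 h3).le)
      · intro h
        rw [not_and] at h
        rcases hpendant v with h1 | h1
        · refine ⟨h1, fun h3 => ?_⟩
          have h5 := h h3
          rw [hpinv] at h5
          push_neg at h5
          exact lt_of_le_of_ne h5.2 (hpne v)
        · have h5 := h h1
          rw [hpinv] at h5
          push_neg at h5
          exact ⟨h5.1, fun _ => lt_of_le_of_ne h5.2 (hpne v)⟩
    have hnbr : ∀ v ∈ S, T.neighborSet v = {p v} := by
      intro v hv
      have hpv : T.Pendant v := ((hmemS v).1 hv).1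
      obtain ⟨a, ha⟩ := Set.ncard_eq_one.1 hpv
      have hmem : p v ∈ T.neighborSet v := M.adj_sub (hpadj v)
      rw [ha] at hmem ⊢
      rw [Set.mem_singleton_iff] at hmem
      rw [hmem]
    have hSsq : T.sq.IsStableSet (↑S : Set V) := by
      intro a ha b hb hne hadj
      simp only [Finset.mem_coe] at ha hb
      rcases hadj with h | ⟨-, w, haw, hwb⟩
      · have hb' : b ∈ T.neighborSet a := h
        rw [hnbr a ha, Set.mem_singleton_iff] at hb'
        subst hb'
        exact (hone a).1 ha hb
      · have h1 : w ∈ T.neighborSet a := haw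
        have hb2 : w ∈ T.neighborSet b := hwb.symm
        rw [hnbr a ha, Set.mem_singleton_iff] at h1
        rw [hnbr b hb, Set.mem_singleton_iff] at hb2
        apply hne
        rw [← hpinv a, ← h1, hb2, hpinv]
    have hcompl : ∀ a : V, a ∉ S → p a ∈ S := by
      intro a ha
      have h := hone (p a)
      rw [hpinv] at h
      exact h.mpr ha
    have hle : T.alpha ≤ S.card := by
      obtain ⟨A, hA, hAc⟩ := alpha_spec T
      rw [← hAc]
      apply Finset.card_le_card_of_injOn (fun a => if a ∈ S then a else p a)
      · intro a _
        by_cases h : a ∈ S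
        · simpa [h]
        · simp only [h, if_false]
          exact hcompl a h
      · intro a ha b hb heq
        simp only [Finset.mem_coe] at ha hb
        by_cases h1 : a ∈ S <;> by_cases h2 : b ∈ S <;>
          simp only [h1, h2, if_true, if_false] at heq
        · exact heq
        · exfalso
          have hadj : M.Adj b a := heq ▸ hpadj b
          have hTadj : T.Adj b a := M.adj_sub hadj
          exact hA (by exact_mod_cast hb) (by exact_mod_cast ha) hTadj.ne hTadj
        · exfalso
          have hadj : M.Adj a b := heq.symm ▸ hpadj a
          have hTadj : T.Adj a b := M.adj_sub hadj
          exact hA (by exact_mod_cast ha) (by exact_mod_cast hb) hTadj.ne hTadj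
        · have := congrArg p heq
          rwa [hpinv, hpinv] at this
    have hge : S.card ≤ T.sq.alpha := card_le_alpha hSsq
    have hsle := alpha_sq_le T
    unfold SimpleGraph.SquareStable
    omega
end

section
/- If G is a square-stable graph, then G is a König-Egerváry graph if and only if G² is a König-Egerváry graph. -/
open SimpleGraph

namespace SG19


variable {V : Type*} [Fintype V]

lemma alpha_spec (G : SimpleGraph V) :
    ∃ s : Finset V, G.IsStableSet ↑s ∧ s.card = G.alpha := by
  have h := Nat.sSup_mem (s := {n | ∃ s : Finset V, G.IsStableSet ↑s ∧ s.card = n})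
    ⟨0, ∅, by simp [SimpleGraph.IsStableSet], rfl⟩
    ⟨Fintype.card V, by rintro n ⟨s, _, rfl⟩; exact s.card_le_univ⟩
  exact h

lemma card_le_alpha (G : SimpleGraph V) {s : Finset V} (h : G.IsStableSet ↑s) :
    s.card ≤ G.alpha :=
  le_csSup ⟨Fintype.card V, by rintro n ⟨t, _, rfl⟩; exact t.card_le_univ⟩ ⟨s, h, rfl⟩

lemma mu_spec (G : SimpleGraph V) :
    ∃ M : G.Subgraph, M.IsMatching ∧ M.edgeSet.ncard = G.mu := by
  have h := Nat.sSup_mem (s := {n | ∃ M : G.Subgraph, M.IsMatching ∧ M.edgeSet.ncard = n})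
    ⟨0, ⊥, by rintro v hv; simp at hv, by simp⟩
    ⟨(Set.univ : Set (Sym2 V)).ncard, by
      rintro n ⟨M, _, rfl⟩
      exact Set.ncard_le_ncard (Set.subset_univ _) Set.finite_univ⟩
  exact h

lemma le_mu (G : SimpleGraph V) {M : G.Subgraph} (h : M.IsMatching) :
    M.edgeSet.ncard ≤ G.mu :=
  le_csSup ⟨(Set.univ : Set (Sym2 V)).ncard, by
      rintro n ⟨M, _, rfl⟩
      exact Set.ncard_le_ncard (Set.subset_univ _) Set.finite_univ⟩ ⟨M, h, rfl⟩


variable {V : Type*} [Fintype V] [Nonempty V]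

open Classical in
noncomputable def pick (s : Set V) (e : Sym2 V) : V :=
  if h : ∃ v, v ∈ e ∧ v ∉ s then h.choose else Classical.arbitrary V

lemma edge_eq {G : SimpleGraph V} {M : G.Subgraph} {e : Sym2 V} (he : e ∈ M.edgeSet)
    {x : V} (hx : x ∈ e) : ∃ y, M.Adj x y ∧ e = s(x, y) := by
  induction e with
  | _ u v =>
    rw [Subgraph.mem_edgeSet] at he
    rcases Sym2.mem_iff.mp hx with rfl | rfl
    · exact ⟨v, he, rfl⟩
    · exact ⟨u, he.symm, Sym2.eq_swap⟩

lemma pick_spec {G : SimpleGraph V} {M : G.Subgraph} {s : Set V} (hs : G.IsStableSet s)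
    {e : Sym2 V} (he : e ∈ M.edgeSet) : pick s e ∈ e ∧ pick s e ∉ s := by
  have hex : ∃ v, v ∈ e ∧ v ∉ s := by
    induction e with
    | _ u v =>
      rw [Subgraph.mem_edgeSet] at he
      have hadj := M.adj_sub he
      by_cases hu : u ∈ s
      · by_cases hv : v ∈ s
        · exact absurd hadj (hs hu hv hadj.ne)
        · exact ⟨v, Sym2.mem_mk_right _ _, hv⟩
      · exact ⟨u, Sym2.mem_mk_left _ _, hu⟩
  simp only [pick]
  rw [dif_pos hex]
  exact hex.choose_spec

lemma pick_injOn {G : SimpleGraph V} {M : G.Subgraph} (hM : M.IsMatching)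
    {s : Set V} (hs : G.IsStableSet s) : Set.InjOn (pick s) M.edgeSet := by
  intro e1 h1 e2 h2 heq
  obtain ⟨y1, ha1, he1⟩ := edge_eq h1 (pick_spec hs h1).1
  have hx2 : pick s e1 ∈ e2 := heq ▸ (pick_spec hs h2).1
  obtain ⟨y2, ha2, he2⟩ := edge_eq h2 hx2
  rw [he1, he2, (hM (M.edge_vert ha1)).unique ha1 ha2]

lemma count_le {G : SimpleGraph V} {M : G.Subgraph} (hM : M.IsMatching)
    {s : Set V} (hs : G.IsStableSet s) : M.edgeSet.ncard ≤ sᶜ.ncard :=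
  Set.ncard_le_ncard_of_injOn (pick s) (fun e he => (pick_spec hs he).2)
    (pick_injOn hM hs) (Set.toFinite _)

lemma alpha_add_mu_le (G : SimpleGraph V) : G.alpha + G.mu ≤ Fintype.card V := by
  obtain ⟨s, hs, hsc⟩ := alpha_spec G
  obtain ⟨M, hM, hMc⟩ := mu_spec G
  have h1 : M.edgeSet.ncard ≤ (↑s : Set V)ᶜ.ncard := count_le hM hs
  have h2 : (↑s : Set V).ncard + (↑s : Set V)ᶜ.ncard = Fintype.card V := by
    rw [Set.ncard_add_ncard_compl, Nat.card_eq_fintype_card]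
  rw [← hsc, ← hMc, ← Set.ncard_coe_finset]
  omega

lemma saturate {G : SimpleGraph V} {M : G.Subgraph} (hM : M.IsMatching)
    {s : Set V} (hs : G.IsStableSet s) (hc : M.edgeSet.ncard = sᶜ.ncard) :
    ∀ b ∉ s, ∃ a ∈ s, M.Adj b a := by
  have himg : pick s '' M.edgeSet = sᶜ := by
    apply Set.eq_of_subset_of_ncard_le
    · rintro x ⟨e, he, rfl⟩; exact (pick_spec hs he).2
    · rw [Set.ncard_image_of_injOn (pick_injOn hM hs), hc]
    · exact Set.toFinite _
  intro b hb
  obtain ⟨e, he, hbe⟩ : ∃ e ∈ M.edgeSet, pick s e = b := by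
    have : b ∈ pick s '' M.edgeSet := himg ▸ hb
    obtain ⟨e, he, hbe⟩ := this
    exact ⟨e, he, hbe⟩
  obtain ⟨y, hy, hey⟩ := edge_eq he (hbe ▸ (pick_spec hs he).1)
  refine ⟨y, ?_, hy⟩
  by_contra hys
  have : y ∈ pick s '' M.edgeSet := himg ▸ hys
  obtain ⟨e', he', hye⟩ := this
  obtain ⟨z, hz, hez⟩ := edge_eq he' (hye ▸ (pick_spec hs he').1)
  have hzb : z = b := (hM (M.edge_vert hz)).unique hz hy.symm
  have : e' = e := by rw [hez, hzb, hey, Sym2.eq_swap]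
  rw [this, hbe] at hye
  exact (M.adj_sub hy).ne hye

end SG19

namespace SG19
variable {V : Type*} [Fintype V] [Nonempty V]

/-- Lift a subgraph of `G` to a subgraph of `G.sq`. -/
def liftSq {G : SimpleGraph V} (M : G.Subgraph) : G.sq.Subgraph where
  verts := M.verts
  Adj := M.Adj
  adj_sub := fun h => Or.inl (M.adj_sub h)
  edge_vert := M.edge_vert
  symm := M.symm

lemma mu_le_mu_sq (G : SimpleGraph V) : G.mu ≤ G.sq.mu := by
  obtain ⟨M, hM, hc⟩ := mu_spec G
  have h1 : (liftSq M).IsMatching := hM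
  have h2 : (liftSq M).edgeSet.ncard = M.edgeSet.ncard := rfl
  rw [← hc, ← h2]
  exact le_mu G.sq h1

lemma exists_matching_of_inj {G : SimpleGraph V} {S : Set V} {F : V → V}
    (hF1 : ∀ b ∈ Sᶜ, F b ∈ S ∧ G.Adj b (F b)) (hF2 : Set.InjOn F Sᶜ) :
    ∃ M : G.Subgraph, M.IsMatching ∧ M.edgeSet.ncard = Sᶜ.ncard := by
  refine ⟨⟨Sᶜ ∪ F '' Sᶜ, fun u v => (u ∈ Sᶜ ∧ v = F u) ∨ (v ∈ Sᶜ ∧ u = F v), ?_, ?_, ?_⟩,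
    ?_, ?_⟩
  · rintro u v (⟨hu, rfl⟩ | ⟨hv, rfl⟩)
    · exact (hF1 u hu).2
    · exact ((hF1 v hv).2).symm
  · rintro u v (⟨hu, _⟩ | ⟨hv, rfl⟩)
    · exact Or.inl hu
    · exact Or.inr ⟨v, hv, rfl⟩
  · constructor
    rintro u v (h | h)
    · exact Or.inr h
    · exact Or.inl h
  · intro v hv
    by_cases hvB : v ∈ Sᶜ
    · refine ⟨F v, Or.inl ⟨hvB, rfl⟩, ?_⟩
      rintro w (⟨_, rfl⟩ | ⟨hwB, hvw⟩)
      · rfl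
      · exact absurd ((hF1 w hwB).1) (hvw ▸ hvB)
    · obtain ⟨b, hb, rfl⟩ : ∃ b ∈ Sᶜ, F b = v := by
        rcases hv with h | ⟨b, hb, rfl⟩
        · exact absurd h hvB
        · exact ⟨b, hb, rfl⟩
      refine ⟨b, Or.inr ⟨hb, rfl⟩, ?_⟩
      rintro w (⟨hw, hw2⟩ | ⟨hwB, hvw⟩)
      · exact absurd hw hvB
      · exact hF2 hwB hb hvw.symm
  · have hset : Sym2.fromRel (by constructor; rintro u v (h | h); exacts [Or.inr h, Or.inl h] :
        Std.Symm fun u v => (u ∈ Sᶜ ∧ v = F u) ∨ (v ∈ Sᶜ ∧ u = F v))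
        = (fun b => s(b, F b)) '' Sᶜ := by
      ext e
      induction e with
      | _ u v =>
        simp only [Sym2.fromRel_prop, Set.mem_image]
        constructor
        · rintro (⟨hu, rfl⟩ | ⟨hv, rfl⟩)
          · exact ⟨u, hu, rfl⟩
          · exact ⟨v, hv, Sym2.eq_swap⟩
        · rintro ⟨b, hb, hbe⟩
          rcases Sym2.eq_iff.mp hbe with ⟨rfl, rfl⟩ | ⟨rfl, rfl⟩
          · exact Or.inl ⟨hb, rfl⟩
          · exact Or.inr ⟨hb, rfl⟩
    show (Sym2.fromRel _).ncard = _
    rw [hset]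
    apply Set.ncard_image_of_injOn
    intro b1 hb1 b2 hb2 he
    rcases Sym2.eq_iff.mp he with ⟨h1, _⟩ | ⟨h1, h2⟩
    · exact h1
    · exact absurd ((hF1 b2 hb2).1) (h1 ▸ hb1)

end SG19
theorem stmt19 {V : Type*} [Fintype V] (G : SimpleGraph V)
    (h2 : 2 ≤ Fintype.card V) (hss : G.SquareStable) :
    G.KonigEgervary ↔ G.sq.KonigEgervary := by
  classical
  have hne : Nonempty V := Fintype.card_pos_iff.mp (by omega)
  obtain ⟨S, hS, hSc⟩ := SG19.alpha_spec G.sq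
  have hS' : ∀ ⦃u : V⦄, u ∈ (↑S : Set V) → ∀ ⦃v : V⦄, v ∈ (↑S : Set V) → u ≠ v →
      ¬ G.sq.Adj u v := hS
  have hSG : G.IsStableSet ↑S := fun u hu v hv hne' hadj => hS' hu hv hne' (Or.inl hadj)
  have hScard : S.card = G.alpha := by rw [hSc, ← hss]
  have hcompl : (↑S : Set V).ncard + (↑S : Set V)ᶜ.ncard = Fintype.card V := by
    rw [Set.ncard_add_ncard_compl, Nat.card_eq_fintype_card]
  have hSn : (↑S : Set V).ncard = S.card := Set.ncard_coe_finset S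
  have hle := SG19.alpha_add_mu_le G
  have hle2 := SG19.alpha_add_mu_le G.sq
  constructor
  · intro hKE
    have h2' := SG19.mu_le_mu_sq G
    unfold SimpleGraph.KonigEgervary at *
    rw [hss] at hKE
    omega
  · intro hKE2
    obtain ⟨M, hM, hMc⟩ := SG19.mu_spec G.sq
    have hc : M.edgeSet.ncard = (↑S : Set V)ᶜ.ncard := by
      unfold SimpleGraph.KonigEgervary at hKE2
      omega
    have hsat := SG19.saturate hM hS hc
    -- unique G-neighbor in S
    have hexF : ∀ b ∉ S, ∃ a ∈ (↑S : Set V), G.Adj b a := by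
      intro b hb
      by_contra hcon
      push_neg at hcon
      have hstab : G.IsStableSet ↑(insert b S) := by
        rw [Finset.coe_insert]
        unfold SimpleGraph.IsStableSet
        rw [Set.pairwise_insert]
        refine ⟨hSG, fun c hc hbc => ⟨fun h => hcon c hc h, fun h => hcon c hc h.symm⟩⟩
      have hca := SG19.card_le_alpha G hstab
      rw [Finset.card_insert_of_notMem hb] at hca
      omega
    set F : V → V := fun b => if h : ∃ a ∈ (↑S : Set V), G.Adj b a then h.choose else b
      with hFdef
    have hFspec : ∀ b ∉ S, F b ∈ (↑S : Set V) ∧ G.Adj b (F b) := by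
      intro b hb
      have h := hexF b hb
      simp only [hFdef]
      rw [dif_pos h]
      exact h.choose_spec
    have hFuniq : ∀ b ∉ S, ∀ a ∈ (↑S : Set V), G.Adj b a → a = F b := by
      intro b hb a ha hadj
      by_contra hne'
      exact hS' ha (hFspec b hb).1 hne' (Or.inr ⟨hne', b, hadj.symm, (hFspec b hb).2⟩)
    set σ : V → V := fun b => if h : ∃ a ∈ (↑S : Set V), M.Adj b a then h.choose else b
      with hσdef
    have hσ : ∀ b ∉ S, σ b ∈ (↑S : Set V) ∧ M.Adj b (σ b) := by
      intro b hb
      have h := hsat b (by simpa using hb)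
      simp only [hσdef]
      rw [dif_pos h]
      exact h.choose_spec
    have hσinj : ∀ b1 ∉ S, ∀ b2 ∉ S, σ b1 = σ b2 → b1 = b2 := by
      intro b1 hb1 b2 hb2 heq
      have h1 := (hσ b1 hb1).2
      have h2 := (hσ b2 hb2).2
      rw [← heq] at h2
      exact (hM (M.edge_vert h1.symm)).unique h1.symm h2.symm
    have hgex : ∀ b ∉ S, ∃ w, w ∉ S ∧ F w = σ b := by
      intro b hb
      obtain ⟨haS, hMa⟩ := hσ b hb
      rcases M.adj_sub hMa with h | ⟨hne', w, hbw, hwσ⟩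
      · exact ⟨b, hb, (hFuniq b hb _ haS h).symm⟩
      · have hwS : w ∉ S := by
          intro hwS
          exact hS' (by simpa using hwS) haS hwσ.ne (Or.inl hwσ)
        exact ⟨w, hwS, (hFuniq w hwS _ haS hwσ).symm⟩
    set g : V → V := fun b => if h : ∃ w, w ∉ S ∧ F w = σ b then h.choose else b
      with hgdef
    have hg : ∀ b ∉ S, (g b ∉ S) ∧ F (g b) = σ b := by
      intro b hb
      have h := hgex b hb
      simp only [hgdef]
      rw [dif_pos h]
      exact h.choose_spec
    have hginj : Set.InjOn g ((↑S : Set V)ᶜ) := by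
      intro b1 hb1 b2 hb2 heq
      have h1 := hg b1 (by simpa using hb1)
      have h2 := hg b2 (by simpa using hb2)
      apply hσinj b1 (by simpa using hb1) b2 (by simpa using hb2)
      rw [← h1.2, ← h2.2, heq]
    have himg : g '' ((↑S : Set V)ᶜ) = ((↑S : Set V)ᶜ) := by
      apply Set.eq_of_subset_of_ncard_le
      · rintro x ⟨b, hb, rfl⟩
        simpa using (hg b (by simpa using hb)).1
      · rw [Set.ncard_image_of_injOn hginj]
      · exact Set.toFinite _
    have hFinj : Set.InjOn F ((↑S : Set V)ᶜ) := by
      intro b1 hb1 b2 hb2 heq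
      rw [← himg] at hb1 hb2
      obtain ⟨a1, ha1, rfl⟩ := hb1
      obtain ⟨a2, ha2, rfl⟩ := hb2
      rw [(hg a1 (by simpa using ha1)).2, (hg a2 (by simpa using ha2)).2] at heq
      rw [hσinj a1 (by simpa using ha1) a2 (by simpa using ha2) heq]
    have hF1 : ∀ b ∈ ((↑S : Set V)ᶜ), F b ∈ (↑S : Set V) ∧ G.Adj b (F b) :=
      fun b hb => hFspec b (by simpa using hb)
    obtain ⟨M0, hM0, hM0c⟩ := SG19.exists_matching_of_inj hF1 hFinj
    have hμ : ((↑S : Set V)ᶜ).ncard ≤ G.mu := hM0c ▸ SG19.le_mu G hM0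
    unfold SimpleGraph.KonigEgervary
    omega
end
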